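/- Let (γ,ν): (I,t₀) → ℝ² × S¹ be a Legendre curve with γ(t)=(x(t),z(t)), ν(t)=(cos φ(t), sin φ(t)) and curvature (φ̇,β), and suppose cos φ(t₀) ≠ 0. With H(t) = (x(t)φ̇(t) + β(t)cos φ(t))/2, the function x satisfies the first order linear ODE cos φ(t)·ẋ(t) − φ̇(t)sin φ(t)·x(t) = −2H(t)sin φ(t); equivalently (d/dt)(x(t)cos φ(t)) = −2H(t)sin φ(t), so near t₀, x(t) = (1/cos φ(t))(x(t₀)cos φ(t₀) − ∫_{t₀}^{t} 2H(s)sin φ(s) ds), and ż(t) = 2H(t) − φ̇(t)x(t), so z(t) = z(t₀) + ∫_{t₀}^{t} (2H(s) − φ̇(s)x(s)) ds. -/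

import Mathlib

open Real

/-- Let `(γ, ν)` be a Legendre curve with `γ = (x, z)`,
`ν = (cos φ, sin φ)`, curvature `(φ̇, β)`, and `cos φ(t₀) ≠ 0`.  With
`H = (xφ̇ + β cos φ)/2`, the function `x` satisfies
`cos φ · ẋ - φ̇ sin φ · x = -2H sin φ`, equivalently `(x cos φ)' = -2H sin φ`, so near
`t₀`, `x(t) = (x(t₀)cos φ(t₀) - ∫_{t₀}^t 2H sin φ)/cos φ(t)`; also `ż = 2H - φ̇x`, so
`z(t) = z(t₀) + ∫_{t₀}^t (2H - φ̇x)`. -/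
theorem profile_curve_from_given_H
    (x z φ β H : ℝ → ℝ) (t₀ : ℝ)
    (hx : ContDiff ℝ (⊤ : ℕ∞) x) (hz : ContDiff ℝ (⊤ : ℕ∞) z)
    (hφ : ContDiff ℝ (⊤ : ℕ∞) φ) (hβ : ContDiff ℝ (⊤ : ℕ∞) β)
    (hdx : ∀ t, deriv x t = -(β t) * sin (φ t))
    (hdz : ∀ t, deriv z t = β t * cos (φ t))
    (hH : ∀ t, H t = (x t * deriv φ t + β t * cos (φ t)) / 2)
    (hcos0 : cos (φ t₀) ≠ 0) :
    (∀ t : ℝ,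
      cos (φ t) * deriv x t - deriv φ t * sin (φ t) * x t = -2 * H t * sin (φ t)) ∧
    (∀ t : ℝ, deriv (fun s => x s * cos (φ s)) t = -2 * H t * sin (φ t)) ∧
    (∀ᶠ t in nhds t₀,
      x t = (x t₀ * cos (φ t₀) - ∫ s in t₀..t, 2 * H s * sin (φ s)) / cos (φ t)) ∧
    (∀ t : ℝ, deriv z t = 2 * H t - deriv φ t * x t) ∧
    (∀ t : ℝ, z t = z t₀ + ∫ s in t₀..t, (2 * H s - deriv φ s * x s)) := by
  have hxd : Differentiable ℝ x := hx.differentiable (by simp)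
  have hzd : Differentiable ℝ z := hz.differentiable (by simp)
  have hφd : Differentiable ℝ φ := hφ.differentiable (by simp)
  have hφ' : Continuous (deriv φ) := hφ.continuous_deriv (by exact_mod_cast le_top)
  have hβc : Continuous β := hβ.continuous
  have hxc : Continuous x := hx.continuous
  have hφc : Continuous φ := hφ.continuous
  have hHc : Continuous H := by
    have : Continuous fun t => (x t * deriv φ t + β t * cos (φ t)) / 2 :=
      ((hxc.mul hφ').add (hβc.mul (Real.continuous_cos.comp hφc))).div_const 2
    exact this.congr fun t => (hH t).symm
  have h1 : ∀ t : ℝ,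
      cos (φ t) * deriv x t - deriv φ t * sin (φ t) * x t = -2 * H t * sin (φ t) := by
    intro t
    rw [hdx t, hH t]
    ring
  have h2 : ∀ t : ℝ, deriv (fun s => x s * cos (φ s)) t = -2 * H t * sin (φ t) := by
    intro t
    have hc : DifferentiableAt ℝ (fun s => cos (φ s)) t :=
      (Real.differentiable_cos.differentiableAt).comp t (hφd t)
    rw [deriv_fun_mul (hxd t) hc]
    have : deriv (fun s => cos (φ s)) t = -sin (φ t) * deriv φ t := by
      rw [deriv_cos (hφd t)]
    rw [this, hdx t, hH t]
    ring
  have hdiffxc : Differentiable ℝ (fun s => x s * cos (φ s)) :=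
    hxd.mul (Real.differentiable_cos.comp hφd)
  have hftc : ∀ t : ℝ, x t * cos (φ t) - x t₀ * cos (φ t₀)
      = ∫ s in t₀..t, -2 * H s * sin (φ s) := by
    intro t
    have hcont : Continuous fun s => -2 * H s * sin (φ s) :=
      (continuous_const.mul hHc).mul (Real.continuous_sin.comp hφc)
    have hint : IntervalIntegrable (deriv fun s => x s * cos (φ s)) MeasureTheory.volume t₀ t :=
      ((hcont.congr fun s => (h2 s).symm).continuousOn).intervalIntegrable
    have key := intervalIntegral.integral_deriv_eq_sub (fun s _ => hdiffxc s) hint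
    rw [← key]
    exact (intervalIntegral.integral_congr fun s _ => h2 s)
  have h4 : ∀ t : ℝ, deriv z t = 2 * H t - deriv φ t * x t := by
    intro t
    rw [hdz t, hH t]; ring
  refine ⟨h1, h2, ?_, h4, ?_⟩
  · have hne : ∀ᶠ t in nhds t₀, cos (φ t) ≠ 0 := by
      have : Continuous fun t => cos (φ t) := Real.continuous_cos.comp hφc
      exact this.continuousAt.eventually_ne hcos0
    filter_upwards [hne] with t ht
    have := hftc t
    have hint : (∫ s in t₀..t, -2 * H s * sin (φ s))
        = - ∫ s in t₀..t, 2 * H s * sin (φ s) := by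
      rw [← intervalIntegral.integral_neg]
      congr 1; funext s; ring
    rw [hint] at this
    field_simp
    linarith
  · intro t
    have : z t - z t₀ = ∫ s in t₀..t, (2 * H s - deriv φ s * x s) := by
      have hcont : Continuous fun s => 2 * H s - deriv φ s * x s :=
        (continuous_const.mul hHc).sub (hφ'.mul hxc)
      have hint : IntervalIntegrable (deriv z) MeasureTheory.volume t₀ t :=
        ((hcont.congr fun s => (h4 s).symm).continuousOn).intervalIntegrable
      have key := intervalIntegral.integral_deriv_eq_sub (fun s _ => hzd s) hint
      rw [← key]
      exact (intervalIntegral.integral_congr fun s _ => h4 s)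
    linarith
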